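/- Let d ≥ 2 and k ≥ 1 be integers and let c ∈ [0,1). Let x = (x_n)_{n≥1} be a sequence of nonnegative reals with x_i = 1 for all 1 ≤ i ≤ k and x_i ≤ c for all i > k. Then ψ(x)_i = 1 for all 1 ≤ i ≤ k−1, ψ(x)_k ≤ ((2+c)/3)^d, and ψ(x)_i ≤ ((1 + c + c²)/(2 + c))^d for all i ≥ k+1. In particular sup_{i ≥ k} ψ(x)_i ≤ max{((2+c)/3)^d, ((1 + c + c²)/(2 + c))^d} < 1. -/
import Mathlib

/-- The map `ψ` on sequences of nonnegative reals (indices `n ≥ 1` are meaningful;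
coordinate `0` is set to `0`). -/
noncomputable def psi (d : ℕ) (x : ℕ → ℝ) : ℕ → ℝ := fun n =>
  if n = 0 then 0
  else if n = 1 then ((1 + x 1 + x 1 * x 2) / (1 + 2 * x 1)) ^ d
  else x (n - 1) ^ d *
    ((1 + x n + x n * x (n + 1)) / (1 + x (n - 1) + x (n - 1) * x n)) ^ d

lemma key_ineq (c a t s : ℝ) (hc0 : 0 ≤ c) (ha0 : 0 ≤ a) (ha1 : a ≤ 1)
    (ht0 : 0 ≤ t) (htc : t ≤ c) (hsc : s ≤ c) :
    a * ((1 + t + t * s) / (1 + a + a * t)) ≤ (1 + c + c ^ 2) / (2 + c) := by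
  rw [mul_div_assoc']
  rw [div_le_div_iff₀ (by nlinarith) (by nlinarith)]
  nlinarith [mul_nonneg (sub_nonneg.2 ha1) (mul_nonneg hc0 hc0),
    mul_nonneg ha0 (sub_nonneg.2 htc), mul_nonneg (mul_nonneg ha0 ht0) (sub_nonneg.2 hsc),
    mul_nonneg (mul_nonneg (mul_nonneg ha0 ht0) (sub_nonneg.2 hsc)) hc0,
    mul_nonneg (mul_nonneg ha0 (sub_nonneg.2 htc)) hc0,
    mul_nonneg (sub_nonneg.2 ha1) hc0]

theorem stmt_6 (d k : ℕ) (hd : 2 ≤ d) (hk : 1 ≤ k) (c : ℝ) (hc0 : 0 ≤ c) (hc1 : c < 1)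
    (x : ℕ → ℝ) (hx0 : ∀ i, 1 ≤ i → 0 ≤ x i)
    (hx1 : ∀ i, 1 ≤ i → i ≤ k → x i = 1) (hx2 : ∀ i, k < i → x i ≤ c) :
    (∀ i, 1 ≤ i → i ≤ k - 1 → psi d x i = 1) ∧
    psi d x k ≤ ((2 + c) / 3) ^ d ∧
    (∀ i, k + 1 ≤ i → psi d x i ≤ ((1 + c + c ^ 2) / (2 + c)) ^ d) ∧
    (∀ i, k ≤ i → psi d x i ≤
      max (((2 + c) / 3) ^ d) (((1 + c + c ^ 2) / (2 + c)) ^ d)) ∧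
    max (((2 + c) / 3) ^ d) (((1 + c + c ^ 2) / (2 + c)) ^ d) < 1 := by
  have h1 : ∀ i, 1 ≤ i → i ≤ k - 1 → psi d x i = 1 := by
    intro i hi1 hik
    have hik' : i + 1 ≤ k := by omega
    have hxi : x i = 1 := hx1 i hi1 (by omega)
    have hxi1 : x (i + 1) = 1 := hx1 (i + 1) (by omega) hik'
    rcases eq_or_lt_of_le hi1 with h | h
    · have hi : i = 1 := h.symm
      subst hi
      simp only [psi, if_neg one_ne_zero, if_pos rfl]
      rw [hxi, show x 2 = 1 from hxi1]
      norm_num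
    · have hi2 : 2 ≤ i := h
      have hxim : x (i - 1) = 1 := hx1 (i - 1) (by omega) (by omega)
      simp only [psi, if_neg (by omega : i ≠ 0), if_neg (by omega : i ≠ 1)]
      rw [hxi, hxi1, hxim]
      norm_num
  have h2 : psi d x k ≤ ((2 + c) / 3) ^ d := by
    have hxk1 : x (k + 1) ≤ c := hx2 (k + 1) (by omega)
    have hxk10 : 0 ≤ x (k + 1) := hx0 (k + 1) (by omega)
    have hbase : (2 + x (k + 1)) / 3 ≤ (2 + c) / 3 := by linarith
    have hbase0 : 0 ≤ (2 + x (k + 1)) / 3 := by linarith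
    rcases eq_or_lt_of_le hk with h | h
    · have hx1' : x 1 = 1 := hx1 1 le_rfl hk
      simp only [psi, ← h, if_neg one_ne_zero, if_pos rfl]
      rw [hx1']
      calc ((1 + 1 + 1 * x 2) / (1 + 2 * 1)) ^ d = ((2 + x (k+1)) / 3) ^ d := by
            rw [← h]; ring_nf
        _ ≤ ((2 + c) / 3) ^ d := pow_le_pow_left₀ hbase0 hbase d
    · have hk2 : 2 ≤ k := h
      have hxk : x k = 1 := hx1 k hk le_rfl
      have hxkm : x (k - 1) = 1 := hx1 (k - 1) (by omega) (by omega)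
      simp only [psi, if_neg (by omega : k ≠ 0), if_neg (by omega : k ≠ 1)]
      rw [hxk, hxkm]
      calc (1 : ℝ) ^ d * ((1 + 1 + 1 * x (k + 1)) / (1 + 1 + 1 * 1)) ^ d
          = ((2 + x (k+1)) / 3) ^ d := by ring_nf
        _ ≤ ((2 + c) / 3) ^ d := pow_le_pow_left₀ hbase0 hbase d
  have h3 : ∀ i, k + 1 ≤ i → psi d x i ≤ ((1 + c + c ^ 2) / (2 + c)) ^ d := by
    intro i hi
    have hi2 : 2 ≤ i := by omega
    have ha0 : 0 ≤ x (i - 1) := hx0 (i - 1) (by omega)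
    have ha1 : x (i - 1) ≤ 1 := by
      rcases eq_or_lt_of_le hi with h | h
      · rw [show i - 1 = k from by omega, hx1 k hk le_rfl]
      · exact le_trans (hx2 (i - 1) (by omega)) hc1.le
    have ht0 : 0 ≤ x i := hx0 i (by omega)
    have htc : x i ≤ c := hx2 i (by omega)
    have hsc : x (i + 1) ≤ c := hx2 (i + 1) (by omega)
    have hden : (0:ℝ) < 1 + x (i-1) + x (i-1) * x i := by nlinarith
    simp only [psi, if_neg (by omega : i ≠ 0), if_neg (by omega : i ≠ 1)]
    rw [← mul_pow]
    refine pow_le_pow_left₀ ?_ (key_ineq c (x (i-1)) (x i) (x (i+1)) hc0 ha0 ha1 ht0 htc hsc) d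
    have hnum : (0:ℝ) ≤ 1 + x i + x i * x (i+1) := by
      have := hx0 (i+1) (by omega); nlinarith
    positivity
  have hlt : max (((2 + c) / 3) ^ d) (((1 + c + c ^ 2) / (2 + c)) ^ d) < 1 := by
    apply max_lt
    · exact pow_lt_one₀ (by linarith) (by linarith) (by omega)
    · apply pow_lt_one₀
      · positivity
      · rw [div_lt_one (by linarith)]; nlinarith
      · omega
  refine ⟨h1, h2, h3, fun i hi => ?_, hlt⟩
  rcases eq_or_lt_of_le hi with h | h
  · exact (h ▸ h2).trans (le_max_left _ _)
  · exact (h3 i h).trans (le_max_right _ _)
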